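/- Let 0 < p₁ ≤ u₁ < ∞, 0 < p₂ ≤ u₂ < ∞, and j ∈ ℕ₀. Then the operator norm of the identity map id_j: m^{2^{jd}}_{u₁,p₁} → m^{2^{jd}}_{u₂,p₂} satisfies: ‖id_j‖ = 1 if p₁ ≥ p₂ and u₂ ≥ u₁; ‖id_j‖ = 1 if p₁ < p₂ and p₂/u₂ ≤ p₁/u₁; and ‖id_j‖ = 2^{jd(1/u₂ − 1/u₁)} if p₁ ≥ p₂ and u₂ < u₁. -/

import Mathlib

/-- The index set `𝒦_j = {k ∈ ℤ^d : Q_{0,k} ⊆ Q_{-j,0}}`, identified with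
`(Fin d → Fin (2^j))` (the unit cubes inside the cube `[0, 2^j)^d`). -/
abbrev MorreyIdx (d j : ℕ) := Fin d → Fin (2 ^ j)

/-- `Q_{0,k} ⊆ Q_{-ν,m}` for a dyadic cube `Q_{-ν,m} ⊆ Q_{-j,0}` of side length `2^ν`,
where the cube is encoded by `m : Fin d → Fin (2^(j-ν))`: the condition is
`k i / 2^ν = m i` for all `i`. -/
def memSubcube {d j : ℕ} (ν : ℕ) (m : Fin d → ℕ) (k : MorreyIdx d j) : Prop :=
  ∀ i, (k i : ℕ) / 2 ^ ν = m i

instance {d j : ℕ} (ν : ℕ) (m : Fin d → ℕ) (k : MorreyIdx d j) :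
    Decidable (memSubcube ν m k) := by unfold memSubcube; infer_instance

/-- The norm of the finite-dimensional Morrey sequence space `m^{2^{jd}}_{u,p}`:
`‖λ‖ = max_{ν ≤ j, Q_{-ν,m} ⊆ Q_{-j,0}} |Q_{-ν,m}|^{1/u - 1/p}
   (∑_{k : Q_{0,k} ⊆ Q_{-ν,m}} |λ_k|^p)^{1/p}`, with `|Q_{-ν,m}| = 2^{νd}`. -/
noncomputable def morreyNorm (d j : ℕ) (u p : ℝ) (lam : MorreyIdx d j → ℂ) : ℝ :=
  ⨆ ν : Fin (j + 1), ⨆ m : Fin d → Fin (2 ^ (j - (ν : ℕ))),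
    (2 : ℝ) ^ ((((ν : ℕ) * d : ℕ) : ℝ) * (1 / u - 1 / p)) *
      (∑ k : MorreyIdx d j,
        if memSubcube (ν : ℕ) (fun i => (m i : ℕ)) k then ‖lam k‖ ^ p else 0) ^ (1 / p)

/-- The sup-norm on `ℂ^{𝒦_j}`, i.e. the norm of `ℓ∞^{2^{jd}}`. -/
noncomputable def supNorm (d j : ℕ) (lam : MorreyIdx d j → ℂ) : ℝ :=
  ⨆ k : MorreyIdx d j, ‖lam k‖

/-- The operator norm of the identity map `(ℂ^{𝒦_j}, N₁) → (ℂ^{𝒦_j}, N₂)`. -/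
noncomputable def idNorm (d j : ℕ) (N₁ N₂ : (MorreyIdx d j → ℂ) → ℝ) : ℝ :=
  sInf {C : ℝ | 0 ≤ C ∧ ∀ lam : MorreyIdx d j → ℂ, N₂ lam ≤ C * N₁ lam}

namespace Aux

-- Jensen : sum of t-th powers
lemma sum_rpow_le_card_rpow {ι : Type*} (s : Finset ι) (a : ι → ℝ) (ha : ∀ i ∈ s, 0 ≤ a i)
    {t : ℝ} (ht0 : 0 < t) (ht1 : t ≤ 1) :
    ∑ i ∈ s, a i ^ t ≤ (s.card : ℝ) ^ (1 - t) * (∑ i ∈ s, a i) ^ t := by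
  have hb : ∀ i ∈ s, 0 ≤ a i ^ t := fun i hi => Real.rpow_nonneg (ha i hi) t
  have hp : (1:ℝ) ≤ 1 / t := by
    rw [le_div_iff₀ ht0]; linarith
  have H := Real.rpow_sum_le_const_mul_sum_rpow_of_nonneg (s := s) (f := fun i => a i ^ t)
    (p := 1 / t) hp hb
  have h1 : ∀ i ∈ s, (a i ^ t) ^ (1/t) = a i := by
    intro i hi
    rw [← Real.rpow_mul (ha i hi), mul_one_div_cancel ht0.ne', Real.rpow_one]
  rw [Finset.sum_congr rfl h1] at H
  have H2 := Real.rpow_le_rpow (Real.rpow_nonneg (Finset.sum_nonneg hb) _) H ht0.le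
  rw [← Real.rpow_mul (Finset.sum_nonneg hb), one_div_mul_cancel ht0.ne', Real.rpow_one] at H2
  refine H2.trans (le_of_eq ?_)
  rw [Real.mul_rpow (Real.rpow_nonneg (Nat.cast_nonneg _) _) (Finset.sum_nonneg ha),
    ← Real.rpow_mul (Nat.cast_nonneg _)]
  have he : (1 / t - 1) * t = 1 - t := by field_simp
  rw [he]

lemma card_filter_le (d j ν : ℕ) (m : Fin d → ℕ) :
    ((Finset.univ.filter fun k : MorreyIdx d j => memSubcube ν m k).card : ℕ) ≤ 2 ^ (ν * d) := by
  classical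
  have h2 : 0 < 2 ^ ν := by positivity
  have := Finset.card_le_card_of_injOn
    (f := fun k : MorreyIdx d j => fun i : Fin d => (⟨(k i : ℕ) % 2 ^ ν, Nat.mod_lt _ h2⟩ : Fin (2 ^ ν)))
    (s := Finset.univ.filter fun k : MorreyIdx d j => memSubcube ν m k)
    (t := Finset.univ) (fun _ _ => Finset.mem_univ _) ?_
  · calc (Finset.univ.filter fun k : MorreyIdx d j => memSubcube ν m k).card
        ≤ (Finset.univ : Finset (Fin d → Fin (2 ^ ν))).card := this
      _ = 2 ^ (ν * d) := by
          simp [Finset.card_univ, Fintype.card_fun, pow_mul]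
  · intro k hk k' hk' h
    simp only [Finset.coe_filter, Set.mem_setOf_eq, Finset.mem_univ, true_and] at hk hk'
    funext i
    have h1 : (k i : ℕ) % 2 ^ ν = (k' i : ℕ) % 2 ^ ν := by
      have := congrFun h i
      simpa using this
    have hval : (k i : ℕ) = (k' i : ℕ) := by
      conv_lhs => rw [← Nat.div_add_mod (k i : ℕ) (2 ^ ν)]
      conv_rhs => rw [← Nat.div_add_mod (k' i : ℕ) (2 ^ ν)]
      rw [hk i, hk' i, h1]
    exact Fin.ext hval

end Aux

-- continuation: mS/mT infrastructure (tested with contents of a.lean prepended)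
namespace Aux

noncomputable def mS (d j : ℕ) (p : ℝ) (lam : MorreyIdx d j → ℂ) (ν : ℕ) (m : Fin d → ℕ) : ℝ :=
  ∑ k : MorreyIdx d j, if memSubcube ν m k then ‖lam k‖ ^ p else 0

noncomputable def mT (d j : ℕ) (u p : ℝ) (lam : MorreyIdx d j → ℂ) (ν : ℕ) (m : Fin d → ℕ) : ℝ :=
  (2 : ℝ) ^ (((ν * d : ℕ) : ℝ) * (1 / u - 1 / p)) * (mS d j p lam ν m) ^ (1 / p)

lemma morreyNorm_eq (d j : ℕ) (u p : ℝ) (lam : MorreyIdx d j → ℂ) :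
    morreyNorm d j u p lam
      = ⨆ ν : Fin (j + 1), ⨆ m : Fin d → Fin (2 ^ (j - (ν : ℕ))),
          mT d j u p lam (ν : ℕ) (fun i => (m i : ℕ)) := rfl

variable {d j : ℕ} {u p : ℝ} {lam : MorreyIdx d j → ℂ}

lemma mS_nonneg (ν : ℕ) (m : Fin d → ℕ) : 0 ≤ mS d j p lam ν m :=
  Finset.sum_nonneg fun k _ => by
    by_cases h : memSubcube ν m k <;> simp [h] <;> positivity

lemma mT_nonneg (ν : ℕ) (m : Fin d → ℕ) : 0 ≤ mT d j u p lam ν m :=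
  mul_nonneg (Real.rpow_nonneg (by norm_num) _) (Real.rpow_nonneg (mS_nonneg ν m) _)

instance fin_pow_nonempty (n : ℕ) : Nonempty (Fin (2 ^ n)) := ⟨⟨0, by positivity⟩⟩

lemma mT_le_morreyNorm (ν : Fin (j + 1)) (m : Fin d → Fin (2 ^ (j - (ν : ℕ)))) :
    mT d j u p lam (ν : ℕ) (fun i => (m i : ℕ)) ≤ morreyNorm d j u p lam := by
  rw [morreyNorm_eq]
  calc mT d j u p lam (ν : ℕ) (fun i => (m i : ℕ))
      ≤ ⨆ m' : Fin d → Fin (2 ^ (j - (ν : ℕ))), mT d j u p lam (ν : ℕ) (fun i => (m' i : ℕ)) :=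
        le_ciSup (f := fun m' : Fin d → Fin (2 ^ (j - (ν : ℕ))) =>
            mT d j u p lam (ν : ℕ) (fun i => (m' i : ℕ)))
          (Set.Finite.bddAbove (Set.finite_range _)) m
    _ ≤ _ := le_ciSup (f := fun ν' : Fin (j + 1) =>
          ⨆ m' : Fin d → Fin (2 ^ (j - (ν' : ℕ))), mT d j u p lam (ν' : ℕ) (fun i => (m' i : ℕ)))
        (Set.Finite.bddAbove (Set.finite_range _)) ν

lemma morreyNorm_le {C : ℝ}
    (h : ∀ (ν : Fin (j + 1)) (m : Fin d → Fin (2 ^ (j - (ν : ℕ)))),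
      mT d j u p lam (ν : ℕ) (fun i => (m i : ℕ)) ≤ C) :
    morreyNorm d j u p lam ≤ C := by
  rw [morreyNorm_eq]
  exact ciSup_le fun ν => ciSup_le fun m => h ν m

lemma morreyNorm_nonneg : 0 ≤ morreyNorm d j u p lam := by
  have h := mT_le_morreyNorm (lam := lam) (u := u) (p := p)
    (⟨0, Nat.succ_pos j⟩ : Fin (j + 1)) (fun _ => (⟨0, by positivity⟩ : Fin (2 ^ (j - 0))))
  exact le_trans (mT_nonneg _ _) h

lemma coord_le_morreyNorm (hp : 0 < p) (k : MorreyIdx d j) :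
    ‖lam k‖ ≤ morreyNorm d j u p lam := by
  have h := mT_le_morreyNorm (lam := lam) (u := u) (p := p) (⟨0, Nat.succ_pos j⟩ : Fin (j + 1))
    (fun i => k i)
  have hmem : ∀ k' : MorreyIdx d j,
      memSubcube (0 : ℕ) (fun i => ((k i : Fin (2 ^ j)) : ℕ)) k' ↔ k' = k := by
    intro k'
    constructor
    · intro hm; funext i; exact Fin.ext (by simpa using hm i)
    · intro hm; subst hm; intro i; simp [memSubcube]
  have hS : mS d j p lam 0 (fun i => (k i : ℕ)) = ‖lam k‖ ^ p := by
    unfold mS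
    rw [Finset.sum_congr rfl (fun k' _ => by rw [if_congr (hmem k') rfl rfl])]
    simp
  have hT : mT d j u p lam 0 (fun i => (k i : ℕ)) = ‖lam k‖ := by
    unfold mT
    rw [hS, ← Real.rpow_mul (norm_nonneg _), mul_one_div_cancel hp.ne', Real.rpow_one]
    norm_num
  calc ‖lam k‖ = mT d j u p lam 0 (fun i => (k i : ℕ)) := hT.symm
    _ ≤ _ := h

lemma mS_rpow_le (hp : 0 < p) (ν : Fin (j + 1)) (m : Fin d → Fin (2 ^ (j - (ν : ℕ)))) :
    (mS d j p lam (ν : ℕ) (fun i => (m i : ℕ))) ^ (1 / p)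
      ≤ (2 : ℝ) ^ (-((((ν : ℕ) * d : ℕ) : ℝ) * (1 / u - 1 / p))) * morreyNorm d j u p lam := by
  have h := mT_le_morreyNorm (lam := lam) (u := u) (p := p) ν m
  unfold mT at h
  set e := ((((ν : ℕ) * d : ℕ)) : ℝ) * (1 / u - 1 / p) with he
  calc (mS d j p lam (ν : ℕ) (fun i => (m i : ℕ))) ^ (1 / p)
      = (2:ℝ) ^ (-e) * ((2:ℝ) ^ e * (mS d j p lam (ν : ℕ) (fun i => (m i : ℕ))) ^ (1 / p)) := by
        rw [← mul_assoc, ← Real.rpow_add two_pos, neg_add_cancel, Real.rpow_zero, one_mul]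
    _ ≤ _ := mul_le_mul_of_nonneg_left h (Real.rpow_nonneg (by norm_num) _)

end Aux

namespace Aux
variable {d j : ℕ} {lam : MorreyIdx d j → ℂ}

lemma ub_a {p₁ u₁ p₂ u₂ : ℝ} (hp₂ : 0 < p₂) (hp₁ : 0 < p₁) (hp : p₂ ≤ p₁)
    (ν : Fin (j + 1)) (m : Fin d → Fin (2 ^ (j - (ν : ℕ)))) :
    mT d j u₂ p₂ lam (ν : ℕ) (fun i => (m i : ℕ))
      ≤ (2:ℝ) ^ ((((ν : ℕ) * d : ℕ) : ℝ) * (1/u₂ - 1/u₁)) * morreyNorm d j u₁ p₁ lam := by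
  classical
  have hp₁' : p₁ ≠ 0 := hp₁.ne'
  have hp₂' : p₂ ≠ 0 := hp₂.ne'
  set E : ℝ := ((((ν : ℕ) * d : ℕ)) : ℝ) with hE
  set N := morreyNorm d j u₁ p₁ lam with hN
  set S₁ := mS d j p₁ lam (ν : ℕ) (fun i => (m i : ℕ)) with hS₁
  set S₂ := mS d j p₂ lam (ν : ℕ) (fun i => (m i : ℕ)) with hS₂
  set t := p₂ / p₁ with ht
  have ht0 : 0 < t := div_pos hp₂ hp₁
  have ht1 : t ≤ 1 := (div_le_one hp₁).2 hp
  have hS₁nn : 0 ≤ S₁ := mS_nonneg _ _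
  have hS₂nn : 0 ≤ S₂ := mS_nonneg _ _
  set T := Finset.univ.filter
    (fun k : MorreyIdx d j => memSubcube (ν : ℕ) (fun i => (m i : ℕ)) k) with hT
  have hS₂T : S₂ = ∑ k ∈ T, (‖lam k‖ ^ p₁) ^ t := by
    rw [hS₂]; unfold mS
    rw [← Finset.sum_filter, ← hT]
    refine Finset.sum_congr rfl fun k _ => ?_
    rw [← Real.rpow_mul (norm_nonneg _)]
    congr 1
    rw [ht]
    field_simp
  have hS₁T : S₁ = ∑ k ∈ T, ‖lam k‖ ^ p₁ := by
    rw [hS₁]; unfold mS; rw [← Finset.sum_filter]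
  have hcard : ((T.card : ℝ)) ^ (1 - t) ≤ (2:ℝ) ^ (E * (1 - t)) := by
    have h1 : (T.card : ℝ) ≤ (2:ℝ) ^ E := by
      rw [hE, Real.rpow_natCast]
      exact_mod_cast card_filter_le d j (ν : ℕ) (fun i => (m i : ℕ))
    calc ((T.card : ℝ)) ^ (1 - t) ≤ ((2:ℝ) ^ E) ^ (1 - t) :=
          Real.rpow_le_rpow (Nat.cast_nonneg _) h1 (by linarith)
      _ = (2:ℝ) ^ (E * (1 - t)) := by rw [← Real.rpow_mul (by norm_num)]
  have hstep1 : S₂ ≤ (2:ℝ) ^ (E * (1 - t)) * S₁ ^ t := by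
    rw [hS₂T, hS₁T]
    calc ∑ k ∈ T, (‖lam k‖ ^ p₁) ^ t
        ≤ (T.card : ℝ) ^ (1 - t) * (∑ k ∈ T, ‖lam k‖ ^ p₁) ^ t :=
          sum_rpow_le_card_rpow T _ (fun k _ => Real.rpow_nonneg (norm_nonneg _) _) ht0 ht1
      _ ≤ _ := mul_le_mul_of_nonneg_right hcard
          (Real.rpow_nonneg (Finset.sum_nonneg fun k _ => Real.rpow_nonneg (norm_nonneg _) _) _)
  have hstep2 : S₂ ^ (1/p₂) ≤ (2:ℝ) ^ (E * (1 - t) / p₂) * S₁ ^ (1/p₁) := by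
    have h := Real.rpow_le_rpow hS₂nn hstep1 (by positivity : (0:ℝ) ≤ 1/p₂)
    rw [Real.mul_rpow (Real.rpow_nonneg (by norm_num) _) (Real.rpow_nonneg hS₁nn _),
      ← Real.rpow_mul (by norm_num : (0:ℝ) ≤ 2), ← Real.rpow_mul hS₁nn] at h
    have e1 : E * (1 - t) * (1/p₂) = E * (1 - t) / p₂ := by ring
    have e2 : t * (1/p₂) = 1/p₁ := by rw [ht]; field_simp
    rwa [e1, e2] at h
  have hstep3 : S₁ ^ (1/p₁) ≤ (2:ℝ) ^ (-(E * (1/u₁ - 1/p₁))) * N := mS_rpow_le hp₁ ν m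
  show (2:ℝ) ^ (E * (1/u₂ - 1/p₂)) * S₂ ^ (1/p₂) ≤ (2:ℝ) ^ (E * (1/u₂ - 1/u₁)) * N
  calc (2:ℝ) ^ (E * (1/u₂ - 1/p₂)) * S₂ ^ (1/p₂)
      ≤ (2:ℝ) ^ (E * (1/u₂ - 1/p₂)) *
          ((2:ℝ) ^ (E * (1 - t)/p₂) * ((2:ℝ) ^ (-(E * (1/u₁ - 1/p₁))) * N)) := by
        refine mul_le_mul_of_nonneg_left ?_ (Real.rpow_nonneg (by norm_num) _)
        exact le_trans hstep2 (mul_le_mul_of_nonneg_left hstep3 (Real.rpow_nonneg (by norm_num) _))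
    _ = (2:ℝ) ^ (E * (1/u₂ - 1/u₁)) * N := by
        rw [← mul_assoc, ← mul_assoc, ← Real.rpow_add two_pos, ← Real.rpow_add two_pos]
        have hone : (1/p₂ - 1/p₁) * p₂ = 1 - p₂/p₁ := by
          rw [sub_mul, one_div_mul_cancel hp₂', one_div_mul_eq_div]
        have hq : E * (1 - t)/p₂ = E * (1/p₂ - 1/p₁) := by
          rw [ht, div_eq_iff hp₂', mul_assoc, hone]
        rw [hq]
        have hexp : E * (1/u₂ - 1/p₂) + E * (1/p₂ - 1/p₁) + -(E * (1/u₁ - 1/p₁))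
            = E * (1/u₂ - 1/u₁) := by ring
        rw [hexp]
end Aux

namespace Aux
variable {d j : ℕ} {lam : MorreyIdx d j → ℂ}

lemma ub_b {p₁ u₁ p₂ u₂ : ℝ} (hp₁ : 0 < p₁) (hp : p₁ ≤ p₂) (hu₁ : 0 < u₁) (hu₂ : 0 < u₂)
    (hcond : 1/u₂ ≤ p₁ / (u₁ * p₂)) (hN : 0 < morreyNorm d j u₁ p₁ lam)
    (ν : Fin (j + 1)) (m : Fin d → Fin (2 ^ (j - (ν : ℕ)))) :
    mT d j u₂ p₂ lam (ν : ℕ) (fun i => (m i : ℕ)) ≤ morreyNorm d j u₁ p₁ lam := by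
  classical
  have hp₂ : 0 < p₂ := lt_of_lt_of_le hp₁ hp
  have hp₁' : p₁ ≠ 0 := hp₁.ne'
  have hp₂' : p₂ ≠ 0 := hp₂.ne'
  set E : ℝ := ((((ν : ℕ) * d : ℕ)) : ℝ) with hE
  have hEnn : 0 ≤ E := by rw [hE]; positivity
  set N := morreyNorm d j u₁ p₁ lam with hN'
  set S₁ := mS d j p₁ lam (ν : ℕ) (fun i => (m i : ℕ)) with hS₁
  set S₂ := mS d j p₂ lam (ν : ℕ) (fun i => (m i : ℕ)) with hS₂
  have hS₁nn : 0 ≤ S₁ := mS_nonneg _ _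
  have hS₂nn : 0 ≤ S₂ := mS_nonneg _ _
  -- pointwise bound
  have key : ∀ k : MorreyIdx d j,
      (if memSubcube (ν : ℕ) (fun i => (m i : ℕ)) k then ‖lam k‖ ^ p₂ else 0)
        ≤ N ^ (p₂ - p₁) * (if memSubcube (ν : ℕ) (fun i => (m i : ℕ)) k
            then ‖lam k‖ ^ p₁ else 0) := by
    intro k
    by_cases hm : memSubcube (ν : ℕ) (fun i => (m i : ℕ)) k
    · simp only [if_pos hm]
      rcases eq_or_lt_of_le (norm_nonneg (lam k)) with h0 | h0
      · rw [← h0, Real.zero_rpow hp₂', Real.zero_rpow hp₁', mul_zero]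
      · have hsplit : ‖lam k‖ ^ p₂ = ‖lam k‖ ^ (p₂ - p₁) * ‖lam k‖ ^ p₁ := by
          rw [← Real.rpow_add h0]; ring_nf
        rw [hsplit]
        exact mul_le_mul_of_nonneg_right
          (Real.rpow_le_rpow (norm_nonneg _) (coord_le_morreyNorm hp₁ k) (by linarith))
          (Real.rpow_nonneg (norm_nonneg _) _)
    · simp [hm]
  have hS2 : S₂ ≤ N ^ (p₂ - p₁) * S₁ := by
    rw [hS₂, hS₁]; unfold mS
    rw [Finset.mul_sum]
    exact Finset.sum_le_sum fun k _ => key k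
  have h2 : S₂ ^ (1/p₂) ≤ N ^ ((p₂ - p₁)/p₂) * S₁ ^ (1/p₂) := by
    have h := Real.rpow_le_rpow hS₂nn hS2 (by positivity : (0:ℝ) ≤ 1/p₂)
    rwa [Real.mul_rpow (Real.rpow_nonneg hN.le _) hS₁nn,
      ← Real.rpow_mul hN.le, mul_one_div] at h
  have h3 : S₁ ^ (1/p₂)
      ≤ (2:ℝ) ^ (-(E * (1/u₁ - 1/p₁)) * (p₁/p₂)) * N ^ (p₁/p₂) := by
    have hbase := mS_rpow_le (u := u₁) (lam := lam) hp₁ ν m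
    rw [← hS₁] at hbase
    have h := Real.rpow_le_rpow (Real.rpow_nonneg hS₁nn _) hbase
      (by positivity : (0:ℝ) ≤ p₁/p₂)
    have hee : (1/p₁) * (p₁/p₂) = 1/p₂ := by field_simp
    rwa [← Real.rpow_mul hS₁nn, hee,
      Real.mul_rpow (Real.rpow_nonneg (by norm_num) _) morreyNorm_nonneg,
      ← Real.rpow_mul (by norm_num : (0:ℝ) ≤ 2)] at h
  calc mT d j u₂ p₂ lam (ν : ℕ) (fun i => (m i : ℕ))
      = (2:ℝ) ^ (E * (1/u₂ - 1/p₂)) * S₂ ^ (1/p₂) := rfl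
    _ ≤ (2:ℝ) ^ (E * (1/u₂ - 1/p₂)) *
        (N ^ ((p₂ - p₁)/p₂) * ((2:ℝ) ^ (-(E * (1/u₁ - 1/p₁)) * (p₁/p₂)) * N ^ (p₁/p₂))) := by
        refine mul_le_mul_of_nonneg_left ?_ (Real.rpow_nonneg (by norm_num) _)
        exact le_trans h2 (mul_le_mul_of_nonneg_left h3 (Real.rpow_nonneg hN.le _))
    _ = (2:ℝ) ^ (E * (1/u₂ - 1/p₂) + -(E * (1/u₁ - 1/p₁)) * (p₁/p₂)) * N := by
        rw [mul_comm (N ^ ((p₂ - p₁)/p₂)) _, mul_assoc, ← Real.rpow_add hN,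
          ← mul_assoc, ← Real.rpow_add two_pos]
        have : p₁/p₂ + (p₂ - p₁)/p₂ = 1 := by field_simp; ring
        rw [this, Real.rpow_one]
    _ ≤ 1 * N := by
        refine mul_le_mul_of_nonneg_right ?_ hN.le
        refine Real.rpow_le_one_of_one_le_of_nonpos one_le_two ?_
        have hfac : 1/u₂ - 1/p₂ + -((1/u₁ - 1/p₁) * (p₁/p₂)) ≤ 0 := by
          have hx : (1/u₁ - 1/p₁) * (p₁/p₂) = p₁/(u₁*p₂) - 1/p₂ := by
            field_simp
          rw [hx]
          linarith
        calc E * (1/u₂ - 1/p₂) + -(E * (1/u₁ - 1/p₁)) * (p₁/p₂)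
            = E * (1/u₂ - 1/p₂ + -((1/u₁ - 1/p₁) * (p₁/p₂))) := by ring
          _ ≤ 0 := mul_nonpos_of_nonneg_of_nonpos hEnn hfac
    _ = N := one_mul N
end Aux

namespace Aux
variable {d j : ℕ}

def kzero (d j : ℕ) : MorreyIdx d j := fun _ => ⟨0, by positivity⟩

noncomputable def delta (d j : ℕ) : MorreyIdx d j → ℂ := fun k => if k = kzero d j then 1 else 0

lemma morreyNorm_delta {u p : ℝ} (hp : 0 < p) (hpu : p ≤ u) :
    morreyNorm d j u p (delta d j) = 1 := by
  classical
  apply le_antisymm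
  · refine morreyNorm_le fun ν m => ?_
    have hptwise : ∀ k : MorreyIdx d j,
        (if memSubcube (ν : ℕ) (fun i => (m i : ℕ)) k then ‖delta d j k‖ ^ p else 0)
          = if k = kzero d j
              then (if memSubcube (ν : ℕ) (fun i => (m i : ℕ)) (kzero d j) then (1:ℝ) else 0)
              else 0 := by
      intro k
      by_cases hk : k = kzero d j
      · subst hk
        by_cases hm : memSubcube (ν : ℕ) (fun i => (m i : ℕ)) (kzero d j) <;>
          simp [hm, delta, Real.one_rpow]
      · by_cases hm : memSubcube (ν : ℕ) (fun i => (m i : ℕ)) k <;>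
          simp [hk, hm, delta, Real.zero_rpow hp.ne']
    have hS : mS d j p (delta d j) (ν : ℕ) (fun i => (m i : ℕ))
        = if memSubcube (ν : ℕ) (fun i => (m i : ℕ)) (kzero d j) then (1:ℝ) else 0 := by
      unfold mS
      rw [Finset.sum_congr rfl fun k _ => hptwise k, Finset.sum_ite_eq' Finset.univ (kzero d j)]
      simp
    have h1 : (mS d j p (delta d j) (ν : ℕ) (fun i => (m i : ℕ))) ^ (1/p) ≤ 1 := by
      rw [hS]
      by_cases hm : memSubcube (ν : ℕ) (fun i => (m i : ℕ)) (kzero d j)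
      · simp [hm, Real.one_rpow]
      · rw [if_neg hm, Real.zero_rpow (by positivity : (0:ℝ) < 1/p).ne']
        norm_num
    have h2 : (2:ℝ) ^ ((((ν : ℕ) * d : ℕ) : ℝ) * (1/u - 1/p)) ≤ 1 := by
      refine Real.rpow_le_one_of_one_le_of_nonpos one_le_two ?_
      refine mul_nonpos_of_nonneg_of_nonpos (by positivity) ?_
      have := one_div_le_one_div_of_le hp hpu
      linarith
    calc mT d j u p (delta d j) (ν : ℕ) (fun i => (m i : ℕ))
        ≤ 1 * 1 := mul_le_mul h2 h1 (Real.rpow_nonneg (mS_nonneg _ _) _) zero_le_one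
      _ = 1 := one_mul 1
  · have hmem : ∀ k : MorreyIdx d j,
        memSubcube ((⟨0, Nat.succ_pos j⟩ : Fin (j + 1)) : ℕ)
          (fun i => (((fun _ => ⟨0, by positivity⟩ : Fin d → Fin (2 ^ (j - 0))) i) : ℕ)) k
          ↔ k = kzero d j := by
      intro k
      constructor
      · intro hm; funext i; exact Fin.ext (by simpa [kzero] using hm i)
      · intro hm; subst hm; intro i; simp [kzero]
    have hS : mS d j p (delta d j) 0 (fun _ => 0) = 1 := by
      unfold mS
      rw [Finset.sum_congr rfl fun k _ => by
        rw [if_congr (by simpa using hmem k) rfl rfl]]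
      rw [Finset.sum_ite_eq' Finset.univ (kzero d j)]
      simp [delta]
    have hT : mT d j u p (delta d j) ((⟨0, Nat.succ_pos j⟩ : Fin (j + 1)) : ℕ)
        (fun i => (((fun _ => ⟨0, by positivity⟩ : Fin d → Fin (2 ^ (j - 0))) i) : ℕ)) = 1 := by
      unfold mT
      have : mS d j p (delta d j) ((⟨0, Nat.succ_pos j⟩ : Fin (j + 1)) : ℕ)
          (fun i => (((fun _ => ⟨0, by positivity⟩ : Fin d → Fin (2 ^ (j - 0))) i) : ℕ))
          = mS d j p (delta d j) 0 (fun _ => 0) := rfl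
      rw [this, hS]
      simp [Real.one_rpow]
    calc (1:ℝ) = _ := hT.symm
      _ ≤ _ := mT_le_morreyNorm (⟨0, Nat.succ_pos j⟩ : Fin (j + 1))
          (fun _ => ⟨0, by positivity⟩)

lemma morreyNorm_ones {u p : ℝ} (hp : 0 < p) (hpu : p ≤ u) :
    morreyNorm d j u p (fun _ => (1:ℂ)) = (2:ℝ) ^ ((((j * d : ℕ)) : ℝ) / u) := by
  classical
  have hu : 0 < u := lt_of_lt_of_le hp hpu
  apply le_antisymm
  · refine morreyNorm_le fun ν m => ?_
    set E : ℝ := ((((ν : ℕ) * d : ℕ)) : ℝ) with hE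
    have hEnn : 0 ≤ E := by rw [hE]; positivity
    have hS : mS d j p (fun _ => (1:ℂ)) (ν : ℕ) (fun i => (m i : ℕ))
        = ((Finset.univ.filter
            (fun k : MorreyIdx d j => memSubcube (ν : ℕ) (fun i => (m i : ℕ)) k)).card : ℝ) := by
      unfold mS
      simp [Finset.sum_boole]
    have hcard : mS d j p (fun _ => (1:ℂ)) (ν : ℕ) (fun i => (m i : ℕ)) ≤ (2:ℝ) ^ E := by
      rw [hS, hE, Real.rpow_natCast]
      exact_mod_cast card_filter_le d j (ν : ℕ) (fun i => (m i : ℕ))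
    have h1 : (mS d j p (fun _ => (1:ℂ)) (ν : ℕ) (fun i => (m i : ℕ))) ^ (1/p)
        ≤ (2:ℝ) ^ (E * (1/p)) := by
      calc (mS d j p (fun _ => (1:ℂ)) (ν : ℕ) (fun i => (m i : ℕ))) ^ (1/p)
          ≤ ((2:ℝ) ^ E) ^ (1/p) :=
            Real.rpow_le_rpow (mS_nonneg _ _) hcard (by positivity)
        _ = (2:ℝ) ^ (E * (1/p)) := by rw [← Real.rpow_mul (by norm_num)]
    calc mT d j u p (fun _ => (1:ℂ)) (ν : ℕ) (fun i => (m i : ℕ))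
        ≤ (2:ℝ) ^ (E * (1/u - 1/p)) * (2:ℝ) ^ (E * (1/p)) :=
          mul_le_mul_of_nonneg_left h1 (Real.rpow_nonneg (by norm_num) _)
      _ = (2:ℝ) ^ (E / u) := by
          rw [← Real.rpow_add two_pos]
          congr 1
          ring
      _ ≤ (2:ℝ) ^ ((((j * d : ℕ)) : ℝ) / u) := by
          refine Real.rpow_le_rpow_of_exponent_le one_le_two ?_
          have hcast : E ≤ (((j * d : ℕ)) : ℝ) := by
            rw [hE]
            exact_mod_cast Nat.mul_le_mul_right d (Fin.is_le ν)
          exact div_le_div_of_nonneg_right hcast hu.le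
  · have hmem : ∀ k : MorreyIdx d j,
        memSubcube ((Fin.last j : Fin (j + 1)) : ℕ)
          (fun i => (((fun _ => ⟨0, by positivity⟩ : Fin d → Fin (2 ^ (j - j))) i) : ℕ)) k := by
      intro k i
      simp [Fin.val_last, Nat.div_eq_of_lt (k i).isLt]
    have hS : mS d j p (fun _ => (1:ℂ)) ((Fin.last j : Fin (j + 1)) : ℕ)
        (fun i => (((fun _ => ⟨0, by positivity⟩ : Fin d → Fin (2 ^ (j - j))) i) : ℕ))
        = (2:ℝ) ^ (((j * d : ℕ)) : ℝ) := by
      unfold mS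
      rw [Finset.sum_congr rfl fun k _ => if_pos (hmem k)]
      rw [Finset.sum_const, Finset.card_univ]
      simp only [norm_one, Real.one_rpow, smul_eq_mul, mul_one]
      rw [Real.rpow_natCast]
      push_cast
      rw [Fintype.card_fun]
      simp [← pow_mul]
    have hT : mT d j u p (fun _ => (1:ℂ)) ((Fin.last j : Fin (j + 1)) : ℕ)
        (fun i => (((fun _ => ⟨0, by positivity⟩ : Fin d → Fin (2 ^ (j - j))) i) : ℕ))
        = (2:ℝ) ^ ((((j * d : ℕ)) : ℝ) / u) := by
      unfold mT
      rw [hS, ← Real.rpow_mul (by norm_num : (0:ℝ) ≤ 2), ← Real.rpow_add two_pos]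
      rw [Fin.val_last]
      congr 1
      field_simp
      ring
    calc (2:ℝ) ^ ((((j * d : ℕ)) : ℝ) / u) = _ := hT.symm
      _ ≤ _ := mT_le_morreyNorm (Fin.last j) (fun _ => ⟨0, by positivity⟩)
end Aux

namespace Aux
variable {d j : ℕ} {lam : MorreyIdx d j → ℂ}

lemma morreyNorm_of_zero {u p u' p' : ℝ} (hp : 0 < p) (hp' : 0 < p')
    (h0 : morreyNorm d j u p lam = 0) : morreyNorm d j u' p' lam ≤ 0 := by
  have hk : ∀ k, ‖lam k‖ = 0 := fun k =>
    le_antisymm (h0 ▸ coord_le_morreyNorm hp k) (norm_nonneg _)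
  refine morreyNorm_le fun ν m => ?_
  have hS : mS d j p' lam (ν : ℕ) (fun i => (m i : ℕ)) = 0 :=
    Finset.sum_eq_zero fun k _ => by
      by_cases hm : memSubcube (ν : ℕ) (fun i => (m i : ℕ)) k <;>
        simp [hm, hk k, Real.zero_rpow hp'.ne']
  show (2:ℝ) ^ _ * (mS d j p' lam (ν : ℕ) (fun i => (m i : ℕ))) ^ (1/p') ≤ (0:ℝ)
  rw [hS, Real.zero_rpow (by positivity : (0:ℝ) < 1/p').ne', mul_zero]

lemma idNorm_eq' (N₁ N₂ : (MorreyIdx d j → ℂ) → ℝ) (C : ℝ) (hC : 0 ≤ C)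
    (hub : ∀ lam, N₂ lam ≤ C * N₁ lam) (lam₀ : MorreyIdx d j → ℂ) (a : ℝ) (ha : 0 < a)
    (h1 : N₁ lam₀ = a) (h2 : N₂ lam₀ = C * a) : idNorm d j N₁ N₂ = C := by
  apply le_antisymm
  · exact csInf_le ⟨0, fun x hx => hx.1⟩ ⟨hC, hub⟩
  · refine le_csInf ⟨C, hC, hub⟩ ?_
    rintro C' ⟨hC', hub'⟩
    have h := hub' lam₀
    rw [h1, h2] at h
    exact le_of_mul_le_mul_right h ha
end Aux


/-- norms of identity maps between finite Morrey sequence spaces. -/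
theorem stmt5 (d : ℕ) (hd : 0 < d) (p₁ u₁ p₂ u₂ : ℝ)
    (hp₁ : 0 < p₁) (hpu₁ : p₁ ≤ u₁) (hp₂ : 0 < p₂) (hpu₂ : p₂ ≤ u₂) (j : ℕ) :
    ((p₂ ≤ p₁ ∧ u₁ ≤ u₂) →
        idNorm d j (morreyNorm d j u₁ p₁) (morreyNorm d j u₂ p₂) = 1) ∧
    ((p₁ < p₂ ∧ p₂ / u₂ ≤ p₁ / u₁) →
        idNorm d j (morreyNorm d j u₁ p₁) (morreyNorm d j u₂ p₂) = 1) ∧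
    ((p₂ ≤ p₁ ∧ u₂ < u₁) →
        idNorm d j (morreyNorm d j u₁ p₁) (morreyNorm d j u₂ p₂)
          = (2 : ℝ) ^ (((j * d : ℕ) : ℝ) * (1 / u₂ - 1 / u₁))) := by
  have hu₁ : 0 < u₁ := lt_of_lt_of_le hp₁ hpu₁
  have hu₂ : 0 < u₂ := lt_of_lt_of_le hp₂ hpu₂
  refine ⟨?_, ?_, ?_⟩
  · rintro ⟨hpp, huu⟩
    refine Aux.idNorm_eq' _ _ 1 zero_le_one ?_ (Aux.delta d j) 1 one_pos
      (Aux.morreyNorm_delta hp₁ hpu₁) (by rw [Aux.morreyNorm_delta hp₂ hpu₂, one_mul])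
    intro lam
    rw [one_mul]
    refine Aux.morreyNorm_le fun ν m => ?_
    calc Aux.mT d j u₂ p₂ lam (ν : ℕ) (fun i => (m i : ℕ))
        ≤ (2:ℝ) ^ ((((ν : ℕ) * d : ℕ) : ℝ) * (1/u₂ - 1/u₁)) * morreyNorm d j u₁ p₁ lam :=
          Aux.ub_a hp₂ hp₁ hpp ν m
      _ ≤ 1 * morreyNorm d j u₁ p₁ lam := by
          refine mul_le_mul_of_nonneg_right ?_ Aux.morreyNorm_nonneg
          refine Real.rpow_le_one_of_one_le_of_nonpos one_le_two ?_
          refine mul_nonpos_of_nonneg_of_nonpos (by positivity) ?_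
          have := one_div_le_one_div_of_le hu₁ huu
          linarith
      _ = morreyNorm d j u₁ p₁ lam := one_mul _
  · rintro ⟨hpp, hcond⟩
    have hcond' : 1/u₂ ≤ p₁/(u₁*p₂) := by
      rw [div_le_div_iff₀ hu₂ hu₁] at hcond
      rw [div_le_div_iff₀ hu₂ (mul_pos hu₁ hp₂)]
      nlinarith
    refine Aux.idNorm_eq' _ _ 1 zero_le_one ?_ (Aux.delta d j) 1 one_pos
      (Aux.morreyNorm_delta hp₁ hpu₁) (by rw [Aux.morreyNorm_delta hp₂ hpu₂, one_mul])
    intro lam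
    rw [one_mul]
    rcases lt_or_eq_of_le (Aux.morreyNorm_nonneg (lam := lam) (u := u₁) (p := p₁)) with h0 | h0
    · exact Aux.morreyNorm_le fun ν m => Aux.ub_b hp₁ hpp.le hu₁ hu₂ hcond' h0 ν m
    · exact le_trans (Aux.morreyNorm_of_zero hp₁ hp₂ h0.symm) (le_of_eq h0)
  · rintro ⟨hpp, huu⟩
    set En : ℝ := (((j * d : ℕ)) : ℝ) with hEn
    refine Aux.idNorm_eq' _ _ ((2:ℝ) ^ (En * (1/u₂ - 1/u₁)))
      (Real.rpow_nonneg (by norm_num) _) ?_ (fun _ => (1:ℂ)) ((2:ℝ) ^ (En / u₁))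
      (Real.rpow_pos_of_pos two_pos _) (Aux.morreyNorm_ones hp₁ hpu₁) ?_
    · intro lam
      refine Aux.morreyNorm_le fun ν m => ?_
      calc Aux.mT d j u₂ p₂ lam (ν : ℕ) (fun i => (m i : ℕ))
          ≤ (2:ℝ) ^ ((((ν : ℕ) * d : ℕ) : ℝ) * (1/u₂ - 1/u₁)) * morreyNorm d j u₁ p₁ lam :=
            Aux.ub_a hp₂ hp₁ hpp ν m
        _ ≤ (2:ℝ) ^ (En * (1/u₂ - 1/u₁)) * morreyNorm d j u₁ p₁ lam := by
            refine mul_le_mul_of_nonneg_right ?_ Aux.morreyNorm_nonneg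
            refine Real.rpow_le_rpow_of_exponent_le one_le_two ?_
            refine mul_le_mul_of_nonneg_right ?_ ?_
            · rw [hEn]
              exact_mod_cast Nat.mul_le_mul_right d (Fin.is_le ν)
            · have := one_div_le_one_div_of_le hu₂ huu.le
              linarith
    · rw [Aux.morreyNorm_ones hp₂ hpu₂, ← Real.rpow_add two_pos]
      congr 1
      ring
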